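/- Fix an integer n ≥ 1. As operators on ℚ[[q]], the first two operators 𝔏_k defined via the rational functions H_{m,j} satisfy 𝔏₁ = n·Lⁿ·D + ((n−1)/2)·(Lⁿ−1) and 𝔏₂ = C(n,2)·Lⁿ·D² + C(n−1,2)·(Lⁿ−1)·D + ((n−1)(n−2)/(24n))·L^{−n}·((3n−5)·Lⁿ + n + 5)·(Lⁿ−1). -/

import Mathlib

/-- The operator `D = q·d/dq` on `ℚ[[q]]`. -/
noncomputable def Dq (f : PowerSeries ℚ) : PowerSeries ℚ :=
  PowerSeries.mk fun d => (d : ℚ) * PowerSeries.coeff (R := ℚ) d f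

/-- Formal derivative `d/du` on `ℚ(u)` via the quotient rule. -/
noncomputable def rderiv (r : RatFunc ℚ) : RatFunc ℚ :=
  algebraMap (Polynomial ℚ) (RatFunc ℚ)
      (Polynomial.derivative r.num * r.denom - r.num * Polynomial.derivative r.denom) /
    algebraMap (Polynomial ℚ) (RatFunc ℚ) (r.denom ^ 2)

/-- The rational functions `H_{m,j} ∈ ℚ(u)` with parameter `n`. -/
noncomputable def Hfun (n : ℕ) : ℕ → ℕ → RatFunc ℚ
  | 0, 0 => 1
  | 0, _ + 1 => 0
  | m + 1, 0 => Hfun n m 0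
  | m + 1, j + 1 =>
    if j + 1 ≤ m + 1 then
      Hfun n m (j + 1) +
        (RatFunc.X - 1) *
          (rderiv (Hfun n m j) +
            (((m : RatFunc ℚ) - (j : RatFunc ℚ)) / ((n : RatFunc ℚ) * RatFunc.X)) *
              Hfun n m j)
    else 0

/-- Evaluation of an element of `ℚ(u)` (whose denominator is a power of `u`)
at `u = Lⁿ = 1+q`, as an element of `ℚ[[q]]`. -/
noncomputable def evalRF (r : RatFunc ℚ) : PowerSeries ℚ :=
  Polynomial.aeval (1 + PowerSeries.X : PowerSeries ℚ) r.num *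
    (Polynomial.aeval (1 + PowerSeries.X : PowerSeries ℚ) r.denom)⁻¹

/-- The operator `𝔏_k = Lⁿ·Σ_{i=0}^{k} C(n,i)·H_{n−i,k−i}(Lⁿ)·D^i` on `ℚ[[q]]`. -/
noncomputable def frakL (n k : ℕ) (L f : PowerSeries ℚ) : PowerSeries ℚ :=
  L ^ n * ∑ i ∈ Finset.range (k + 1),
    PowerSeries.C (R := ℚ) (n.choose i : ℚ) * evalRF (Hfun n (n - i) (k - i)) * Dq^[i] f

open Polynomial PowerSeries

section Aux

local notation "am" => algebraMap (Polynomial ℚ) (RatFunc ℚ)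

lemma exists_fac (p q : ℚ[X]) (hq : q ≠ 0) :
    ∃ g : ℚ[X], g ≠ 0 ∧ q = (am p / am q).denom * g ∧ p = (am p / am q).num * g := by
  set r : RatFunc ℚ := am p / am q with hr
  obtain ⟨g, hg⟩ : r.denom ∣ q := (RatFunc.denom_dvd hq).2 ⟨p, rfl⟩
  have hg0 : g ≠ 0 := by
    rintro rfl; rw [mul_zero] at hg; exact hq hg
  refine ⟨g, hg0, hg, ?_⟩
  have h1 : am r.num / am r.denom = am p / am q := RatFunc.num_div_denom r
  have hd0 : (r.denom : ℚ[X]) ≠ 0 := r.denom_ne_zero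
  rw [div_eq_div_iff (RatFunc.algebraMap_ne_zero hd0) (RatFunc.algebraMap_ne_zero hq)] at h1
  have h2 : r.num * q = p * r.denom := by
    apply RatFunc.algebraMap_injective ℚ
    push_cast [map_mul] at h1 ⊢
    exact h1
  rw [hg] at h2
  have : r.num * g * r.denom = p * r.denom := by linear_combination h2
  exact (mul_right_cancel₀ hd0 this).symm

lemma rderiv_div (p q : ℚ[X]) (hq : q ≠ 0) :
    rderiv (am p / am q) =
      am (Polynomial.derivative p * q - p * Polynomial.derivative q) / am (q ^ 2) := by
  obtain ⟨g, hg0, hqf, hpf⟩ := exists_fac p q hq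
  set r : RatFunc ℚ := am p / am q with hr
  have key : Polynomial.derivative p * q - p * Polynomial.derivative q =
      (Polynomial.derivative r.num * r.denom - r.num * Polynomial.derivative r.denom) * g ^ 2 := by
    rw [hpf, hqf, Polynomial.derivative_mul, Polynomial.derivative_mul]; ring
  have hq2 : q ^ 2 = r.denom ^ 2 * g ^ 2 := by rw [hqf]; ring
  rw [key, hq2, rderiv, map_mul, map_mul,
    mul_div_mul_right _ _ (RatFunc.algebraMap_ne_zero (pow_ne_zero 2 hg0))]

lemma constCoeff_aeval (s : ℚ[X]) :
    PowerSeries.constantCoeff (R := ℚ) (Polynomial.aeval (1 + PowerSeries.X : PowerSeries ℚ) s)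
      = s.eval 1 := by
  rw [Polynomial.aeval_def, Polynomial.hom_eval₂]
  simp [Polynomial.eval₂_eq_eval_map]

lemma evalRF_div (p q : ℚ[X]) (hq : q ≠ 0) (h1 : q.eval 1 ≠ 0) :
    evalRF (am p / am q) =
      Polynomial.aeval (1 + PowerSeries.X : PowerSeries ℚ) p *
        (Polynomial.aeval (1 + PowerSeries.X : PowerSeries ℚ) q)⁻¹ := by
  obtain ⟨g, hg0, hqf, hpf⟩ := exists_fac p q hq
  set r : RatFunc ℚ := am p / am q with hr
  have hge : g.eval 1 ≠ 0 := by
    intro h; apply h1; rw [hqf]; simp [h]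
  have hcc : PowerSeries.constantCoeff (R := ℚ)
      (Polynomial.aeval (1 + PowerSeries.X : PowerSeries ℚ) g) ≠ 0 := by
    rw [constCoeff_aeval]; exact hge
  rw [evalRF, hpf, hqf, map_mul, map_mul, PowerSeries.mul_inv_rev]
  rw [show ∀ a b c : PowerSeries ℚ, a * b * (b⁻¹ * c) = a * (b * b⁻¹) * c by intros; ring,
    PowerSeries.mul_inv_cancel _ hcc, mul_one]

lemma Hfun_zero (n m : ℕ) : Hfun n m 0 = 1 := by
  induction m with
  | zero => rfl
  | succ m ih => rw [Hfun, ih]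

lemma rderiv_one : rderiv (1 : RatFunc ℚ) = 0 := by
  simp [rderiv, RatFunc.num_one, RatFunc.denom_one]

lemma rderiv_lin (a : ℚ) :
    rderiv (am (Polynomial.C a * (Polynomial.X - 1)) / am Polynomial.X) =
      am (Polynomial.C a) / am (Polynomial.X ^ 2) := by
  rw [rderiv_div _ _ Polynomial.X_ne_zero]
  congr 2
  simp only [Polynomial.derivative_mul, Polynomial.derivative_C, Polynomial.derivative_sub,
    Polynomial.derivative_X, Polynomial.derivative_one]
  ring

/-- coefficient of `H_{m,1}` -/
def c1 (n m : ℕ) : ℚ := (m : ℚ) * ((m : ℚ) - 1) / (2 * (n : ℚ))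

/-- coefficients of `H_{m,2}` -/
def a2 (n m : ℕ) : ℚ := (m : ℚ) * ((m : ℚ) - 1) * ((m : ℚ) - 2) / (6 * (n : ℚ))

def b2 (n m : ℕ) : ℚ :=
  (m : ℚ) * ((m : ℚ) - 1) * ((m : ℚ) - 2) * (3 * (m : ℚ) - 5) / (24 * (n : ℚ) ^ 2)

lemma natCast_ne_zero' (k : ℕ) (h : (k : ℚ) ≠ 0) : ((k : ℕ) : RatFunc ℚ) ≠ 0 := by
  rw [← map_natCast am]
  refine RatFunc.algebraMap_ne_zero fun hc => h ?_
  simpa using congrArg (Polynomial.eval 0) hc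

lemma key1 {K : Type*} [Field K] (x μ Cc Cc' : K) (hx : x ≠ 0)
    (h : Cc' = Cc + μ) :
    Cc * (x - 1) / x + (x - 1) * (μ / x) = Cc' * (x - 1) / x := by
  subst h; field_simp

lemma key2 {K : Type*} [Field K] (x μ A B Cc A' B' : K) (hx : x ≠ 0)
    (hA : A' = A + Cc) (hB : B' = B + μ * Cc) :
    (A * (x - 1) + B * (x - 1) ^ 2) / x ^ 2 +
      (x - 1) * (Cc / x ^ 2 + (μ / x) * (Cc * (x - 1) / x)) =
    (A' * (x - 1) + B' * (x - 1) ^ 2) / x ^ 2 := by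
  subst hA hB; field_simp; ring

lemma Hfun_one (n : ℕ) (hn : (n : ℚ) ≠ 0) (m : ℕ) :
    Hfun n m 1 = am (Polynomial.C (c1 n m) * (Polynomial.X - 1)) / am Polynomial.X := by
  have hX : (RatFunc.X : RatFunc ℚ) ≠ 0 := RatFunc.X_ne_zero
  induction m with
  | zero =>
    show (0 : RatFunc ℚ) = _
    simp [c1]
  | succ m ih =>
    rw [show (1 : ℕ) = 0 + 1 from rfl, Hfun, if_pos (by omega), Hfun_zero, rderiv_one, ih]
    simp only [Nat.cast_zero, sub_zero, zero_add, mul_one, map_mul, map_sub, map_one,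
      RatFunc.algebraMap_C, RatFunc.algebraMap_X]
    rw [← div_div]
    refine key1 RatFunc.X _ _ _ hX ?_
    have hq : c1 n (m + 1) = c1 n m + (m : ℚ) / (n : ℚ) := by
      simp only [c1]; push_cast; field_simp; ring
    rw [hq, map_add, map_div₀, map_natCast, map_natCast]

lemma Hfun_two (n : ℕ) (hn : (n : ℚ) ≠ 0) (m : ℕ) :
    Hfun n m 2 = am (Polynomial.C (a2 n m) * (Polynomial.X - 1) +
      Polynomial.C (b2 n m) * (Polynomial.X - 1) ^ 2) / am (Polynomial.X ^ 2) := by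
  have hX : (RatFunc.X : RatFunc ℚ) ≠ 0 := RatFunc.X_ne_zero
  induction m with
  | zero =>
    show (0 : RatFunc ℚ) = _
    have h1 : a2 n 0 = 0 := by simp [a2]
    have h2 : b2 n 0 = 0 := by simp [b2]
    simp [h1, h2]
  | succ m ih =>
    rcases m with _ | m
    · rw [show (2 : ℕ) = 1 + 1 from rfl, Hfun, if_neg (by omega)]
      have h1 : a2 n 1 = 0 := by simp [a2]
      have h2 : b2 n 1 = 0 := by simp [b2]
      simp [h1, h2]
    · rw [show (2 : ℕ) = 1 + 1 from rfl, Hfun, if_pos (by omega)]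
      rw [show (1 + 1 : ℕ) = 2 from rfl]
      rw [ih, Hfun_one n hn, rderiv_lin]
      simp only [map_add, map_mul, map_sub, map_one, map_pow, Nat.cast_one,
        RatFunc.algebraMap_C, RatFunc.algebraMap_X]
      rw [← div_div]
      refine key2 RatFunc.X _ _ _ _ _ _ hX ?_ ?_
      · rw [← map_add]
        congr 1
        simp only [a2, c1]; push_cast; field_simp; ring
      · have hq : b2 n (m + 1 + 1) = b2 n (m + 1) +
            ((((m + 1 : ℕ)) : ℚ) - 1) / (n : ℚ) * c1 n (m + 1) := by
          simp only [b2, c1]; push_cast; field_simp; ring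
        rw [hq, map_add, map_mul, map_div₀, map_sub, map_one, map_natCast, map_natCast]

lemma evalRF_one : evalRF (1 : RatFunc ℚ) = 1 := by
  simp [evalRF, RatFunc.num_one, RatFunc.denom_one]

lemma aeval_lin (a : ℚ) :
    Polynomial.aeval (1 + PowerSeries.X : PowerSeries ℚ) (Polynomial.C a * (Polynomial.X - 1)) =
      PowerSeries.C (R := ℚ) a * PowerSeries.X := by
  simp only [map_mul, map_sub, map_one, Polynomial.aeval_X, Polynomial.aeval_C]
  rw [show ((1 : PowerSeries ℚ) + PowerSeries.X) - 1 = PowerSeries.X by ring]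
  norm_num [PowerSeries.algebraMap_apply]

lemma evalRF_lin (a : ℚ) :
    evalRF (am (Polynomial.C a * (Polynomial.X - 1)) / am Polynomial.X) =
      PowerSeries.C (R := ℚ) a * PowerSeries.X * (1 + PowerSeries.X : PowerSeries ℚ)⁻¹ := by
  rw [evalRF_div _ _ Polynomial.X_ne_zero (by simp), aeval_lin, Polynomial.aeval_X]

lemma evalRF_quad (a b : ℚ) :
    evalRF (am (Polynomial.C a * (Polynomial.X - 1) +
        Polynomial.C b * (Polynomial.X - 1) ^ 2) / am (Polynomial.X ^ 2)) =
      (PowerSeries.C (R := ℚ) a * PowerSeries.X + PowerSeries.C (R := ℚ) b * PowerSeries.X ^ 2) *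
        ((1 + PowerSeries.X : PowerSeries ℚ)⁻¹ * (1 + PowerSeries.X : PowerSeries ℚ)⁻¹) := by
  rw [evalRF_div _ _ (pow_ne_zero 2 Polynomial.X_ne_zero) (by simp)]
  have h1 : Polynomial.aeval (1 + PowerSeries.X : PowerSeries ℚ)
      (Polynomial.C a * (Polynomial.X - 1) + Polynomial.C b * (Polynomial.X - 1) ^ 2) =
      PowerSeries.C (R := ℚ) a * PowerSeries.X + PowerSeries.C (R := ℚ) b * PowerSeries.X ^ 2 := by
    simp only [map_add, map_mul, map_sub, map_one, map_pow, Polynomial.aeval_X,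
      Polynomial.aeval_C]
    rw [show ((1 : PowerSeries ℚ) + PowerSeries.X) - 1 = PowerSeries.X by ring]
    norm_num [PowerSeries.algebraMap_apply]
  have h2 : Polynomial.aeval (1 + PowerSeries.X : PowerSeries ℚ) (Polynomial.X ^ 2 : Polynomial ℚ)
      = (1 + PowerSeries.X : PowerSeries ℚ) ^ 2 := by
    simp
  rw [h1, h2, show ((1 + PowerSeries.X : PowerSeries ℚ)) ^ 2 =
      (1 + PowerSeries.X) * (1 + PowerSeries.X) from sq _, PowerSeries.mul_inv_rev]

end Aux

/-- `𝔏₁ = n·Lⁿ·D + ((n−1)/2)·(Lⁿ−1)` and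
`𝔏₂ = C(n,2)·Lⁿ·D² + C(n−1,2)·(Lⁿ−1)·D
  + ((n−1)(n−2)/(24n))·L^{−n}·((3n−5)·Lⁿ + n + 5)·(Lⁿ−1)`,
as operators on `ℚ[[q]]`, where `L` is the unique power series with constant
term `1` and `Lⁿ = 1+q`. -/
theorem stmt_5 (n : ℕ) (hn : 1 ≤ n) (L : PowerSeries ℚ)
    (hL0 : PowerSeries.constantCoeff (R := ℚ) L = 1) (hLn : L ^ n = 1 + PowerSeries.X) :
    ∀ f : PowerSeries ℚ,
      frakL n 1 L f =
        PowerSeries.C (R := ℚ) (n : ℚ) * L ^ n * Dq f +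
          PowerSeries.C (R := ℚ) (((n : ℚ) - 1) / 2) * (L ^ n - 1) * f ∧
      frakL n 2 L f =
        PowerSeries.C (R := ℚ) (n.choose 2 : ℚ) * L ^ n * Dq (Dq f) +
          PowerSeries.C (R := ℚ) ((n - 1).choose 2 : ℚ) * (L ^ n - 1) * Dq f +
          PowerSeries.C (R := ℚ) (((n : ℚ) - 1) * ((n : ℚ) - 2) / (24 * (n : ℚ))) * (L ^ n)⁻¹ *
            (PowerSeries.C (R := ℚ) (3 * (n : ℚ) - 5) * L ^ n + PowerSeries.C (R := ℚ) ((n : ℚ) + 5)) *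
            (L ^ n - 1) * f := by
  intro f
  have hn0 : (n : ℚ) ≠ 0 := Nat.cast_ne_zero.2 (by omega)
  have hu : PowerSeries.constantCoeff (R := ℚ) (1 + PowerSeries.X : PowerSeries ℚ) ≠ 0 := by simp
  have huu : (1 + PowerSeries.X : PowerSeries ℚ) * (1 + PowerSeries.X : PowerSeries ℚ)⁻¹ = 1 :=
    PowerSeries.mul_inv_cancel _ hu
  constructor
  · rw [frakL, Finset.sum_range_succ, Finset.sum_range_succ, Finset.sum_range_zero]
    simp only [Nat.sub_zero, Nat.sub_self, Nat.choose_zero_right, Nat.choose_one_right,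
      Function.iterate_zero, Function.iterate_one, id_eq, Nat.cast_one, map_one, zero_add]
    rw [Hfun_zero, evalRF_one, Hfun_one n hn0, evalRF_lin, hLn]
    have hc : PowerSeries.C (R := ℚ) (c1 n n) = PowerSeries.C (R := ℚ) (((n : ℚ) - 1) / 2) := by
      congr 1; rw [c1]; field_simp
    rw [hc]
    linear_combination (PowerSeries.C (R := ℚ) (((n : ℚ) - 1) / 2) * PowerSeries.X * f) * huu
  · rw [frakL, Finset.sum_range_succ, Finset.sum_range_succ, Finset.sum_range_succ,
      Finset.sum_range_zero]
    have hit2 : Dq^[2] f = Dq (Dq f) := by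
      rw [show (2 : ℕ) = 1 + 1 from rfl, Function.iterate_succ_apply', Function.iterate_one]
    simp only [Nat.sub_zero, Nat.sub_self, Nat.choose_zero_right, Nat.choose_one_right,
      Function.iterate_zero, Function.iterate_one, id_eq, Nat.cast_one, map_one, zero_add,
      hit2]
    rw [show (2 - 1 : ℕ) = 1 from rfl]
    rw [Hfun_zero, evalRF_one, Hfun_one n hn0, evalRF_lin, Hfun_two n hn0, evalRF_quad, hLn]
    have hd2 : PowerSeries.C (R := ℚ) (n : ℚ) * PowerSeries.C (R := ℚ) (c1 n (n - 1)) =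
        PowerSeries.C (R := ℚ) (((n - 1).choose 2 : ℚ)) := by
      rw [← map_mul]
      congr 1
      rw [Nat.cast_choose_two, c1, Nat.cast_sub hn, Nat.cast_one]
      field_simp
    have h2 : PowerSeries.C (R := ℚ) (a2 n n) =
        PowerSeries.C (R := ℚ) (((n : ℚ) - 1) * ((n : ℚ) - 2) / (24 * (n : ℚ))) *
          (PowerSeries.C (R := ℚ) (3 * (n : ℚ) - 5) + PowerSeries.C (R := ℚ) ((n : ℚ) + 5)) := by
      rw [← map_add, ← map_mul]
      congr 1
      rw [a2]; field_simp; ring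
    have h3 : PowerSeries.C (R := ℚ) (b2 n n) =
        PowerSeries.C (R := ℚ) (((n : ℚ) - 1) * ((n : ℚ) - 2) / (24 * (n : ℚ))) *
          PowerSeries.C (R := ℚ) (3 * (n : ℚ) - 5) := by
      rw [← map_mul]
      congr 1
      rw [b2]; field_simp
    linear_combination
      ((PowerSeries.X : PowerSeries ℚ) * f * (1 + PowerSeries.X : PowerSeries ℚ)⁻¹ *
          (PowerSeries.C (R := ℚ) (a2 n n) + PowerSeries.C (R := ℚ) (b2 n n) * PowerSeries.X) +
        PowerSeries.X * Dq f * PowerSeries.C (R := ℚ) (((n - 1).choose 2 : ℚ))) * huu +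
      (PowerSeries.X * (1 + PowerSeries.X : PowerSeries ℚ)⁻¹ * f) * h2 +
      (PowerSeries.X * PowerSeries.X * (1 + PowerSeries.X : PowerSeries ℚ)⁻¹ * f) * h3 +
      (PowerSeries.X * Dq f * (1 + PowerSeries.X) *
        (1 + PowerSeries.X : PowerSeries ℚ)⁻¹) * hd2
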